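/- The function g(x) = x^4 · sin(log(log(1/|x|))) for 0 < |x| < 1/20, extended by g(0) = 0, is three times continuously differentiable on a neighborhood of 0, and g(0) = g'(0) = g''(0) = g'''(0) = 0. -/

import Mathlib

open Real Filter Topology

noncomputable def LL (x : ℝ) : ℝ := Real.log (-Real.log x)
noncomputable def AA (x : ℝ) : ℝ := (-Real.log x)⁻¹

lemma key {x : ℝ} (hx : x ≠ 0) (hx2 : |x| < 1/20) : 1 < -Real.log x := by
  have h1 : Real.log x = Real.log |x| := (Real.log_abs x).symm
  have h2 : Real.log |x| < Real.log (1/20) := Real.log_lt_log (abs_pos.2 hx) hx2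
  have h3 : Real.log (1/20) < -1 := by
    rw [show (1:ℝ)/20 = 20⁻¹ by norm_num, Real.log_inv]
    have : (1:ℝ) < Real.log 20 := by
      rw [Real.lt_log_iff_exp_lt (by norm_num)]
      calc Real.exp 1 < 2.7182818286 := Real.exp_one_lt_d9
        _ < 20 := by norm_num
    linarith
  linarith

lemma hdF {x : ℝ} (hx : x ≠ 0) (hl : 1 < -Real.log x) :
    HasDerivAt (fun y => y^4 * Real.sin (LL y))
      (x^3 * (4 * Real.sin (LL x) - AA x * Real.cos (LL x))) x := by
  have hl0 : -Real.log x ≠ 0 := by linarith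
  have hneg : HasDerivAt (fun y : ℝ => -Real.log y) (-x⁻¹) x := (Real.hasDerivAt_log hx).neg
  have hL : HasDerivAt LL ((-Real.log x)⁻¹ * -x⁻¹) x := (Real.hasDerivAt_log hl0).comp x hneg
  have hS : HasDerivAt (fun y => Real.sin (LL y))
      (Real.cos (LL x) * ((-Real.log x)⁻¹ * -x⁻¹)) x := (Real.hasDerivAt_sin (LL x)).comp x hL
  have h : HasDerivAt (fun y => y^4 * Real.sin (LL y)) _ x := (hasDerivAt_pow 4 x).mul hS
  have hlx : Real.log x ≠ 0 := by intro h; rw [h] at hl; norm_num at hl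
  convert h using 1
  simp only [AA]
  field_simp
  ring

noncomputable def GG1 (x : ℝ) : ℝ := x^3 * (4 * Real.sin (LL x) - AA x * Real.cos (LL x))
noncomputable def GG2 (x : ℝ) : ℝ := x^2 * (12 * Real.sin (LL x) - 7 * AA x * Real.cos (LL x)
  - AA x^2 * Real.cos (LL x) - AA x^2 * Real.sin (LL x))
noncomputable def GG3 (x : ℝ) : ℝ := x * (24 * Real.sin (LL x) - 26 * AA x * Real.cos (LL x)
  - 9 * AA x^2 * Real.cos (LL x) - 9 * AA x^2 * Real.sin (LL x)
  - AA x^3 * Real.cos (LL x) - 3 * AA x^3 * Real.sin (LL x))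

lemma hdG1 {x : ℝ} (hx : x ≠ 0) (hl : 1 < -Real.log x) : HasDerivAt GG1 (GG2 x) x := by
  have hl0 : -Real.log x ≠ 0 := by linarith
  have hlx : Real.log x ≠ 0 := by intro h; rw [h] at hl; norm_num at hl
  have hneg : HasDerivAt (fun y : ℝ => -Real.log y) (-x⁻¹) x := (Real.hasDerivAt_log hx).neg
  have hL : HasDerivAt LL ((-Real.log x)⁻¹ * -x⁻¹) x := (Real.hasDerivAt_log hl0).comp x hneg
  have hS : HasDerivAt (fun y => Real.sin (LL y))
      (Real.cos (LL x) * ((-Real.log x)⁻¹ * -x⁻¹)) x := (Real.hasDerivAt_sin (LL x)).comp x hL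
  have hC : HasDerivAt (fun y => Real.cos (LL y))
      (-Real.sin (LL x) * ((-Real.log x)⁻¹ * -x⁻¹)) x := (Real.hasDerivAt_cos (LL x)).comp x hL
  have hA : HasDerivAt AA (-((-Real.log x)^2)⁻¹ * -x⁻¹) x := (hasDerivAt_inv hl0).comp x hneg
  have h : HasDerivAt GG1 _ x := (hasDerivAt_pow 3 x).mul ((hS.const_mul 4).sub (hA.mul hC))
  convert h using 1
  simp only [AA, GG2]
  field_simp
  ring

lemma hdG2 {x : ℝ} (hx : x ≠ 0) (hl : 1 < -Real.log x) : HasDerivAt GG2 (GG3 x) x := by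
  have hl0 : -Real.log x ≠ 0 := by linarith
  have hlx : Real.log x ≠ 0 := by intro h; rw [h] at hl; norm_num at hl
  have hneg : HasDerivAt (fun y : ℝ => -Real.log y) (-x⁻¹) x := (Real.hasDerivAt_log hx).neg
  have hL : HasDerivAt LL ((-Real.log x)⁻¹ * -x⁻¹) x := (Real.hasDerivAt_log hl0).comp x hneg
  have hS : HasDerivAt (fun y => Real.sin (LL y))
      (Real.cos (LL x) * ((-Real.log x)⁻¹ * -x⁻¹)) x := (Real.hasDerivAt_sin (LL x)).comp x hL
  have hC : HasDerivAt (fun y => Real.cos (LL y))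
      (-Real.sin (LL x) * ((-Real.log x)⁻¹ * -x⁻¹)) x := (Real.hasDerivAt_cos (LL x)).comp x hL
  have hA : HasDerivAt AA (-((-Real.log x)^2)⁻¹ * -x⁻¹) x := (hasDerivAt_inv hl0).comp x hneg
  have h : HasDerivAt GG2 _ x := (hasDerivAt_pow 2 x).mul
    ((((hS.const_mul 12).sub (((hA.const_mul 7).mul hC))).sub ((hA.pow 2).mul hC)).sub
      ((hA.pow 2).mul hS))
  convert h using 1
  simp only [AA, GG3, Pi.pow_apply, show (2:ℕ) - 1 = 1 from rfl, pow_one]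
  field_simp
  ring

lemma ev20 : ∀ᶠ x in 𝓝[≠] (0:ℝ), |x| < 1/20 ∧ x ≠ 0 := by
  filter_upwards [self_mem_nhdsWithin,
    eventually_nhdsWithin_of_eventually_nhds
      (eventually_abs_sub_lt (0:ℝ) (show (0:ℝ) < 1/20 by norm_num))] with x hx hx'
  exact ⟨by simpa using hx', hx⟩

lemma Abound {x : ℝ} (hx : x ≠ 0) (hx2 : |x| < 1/20) : 0 ≤ AA x ∧ AA x ≤ 1 := by
  have hl := key hx hx2
  constructor
  · exact inv_nonneg.2 (by linarith)
  · rw [AA, inv_le_one_iff₀]; right; linarith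

lemma hdF0 : HasDerivAt (fun y : ℝ => y^4 * Real.sin (LL y)) 0 0 := by
  rw [hasDerivAt_iff_tendsto_slope]
  apply squeeze_zero_norm' (a := fun x : ℝ => |x|^3)
  · filter_upwards [ev20] with x ⟨hx2, hx⟩
    rw [slope_def_field]
    have : (x ^ 4 * Real.sin (LL x) - 0 ^ 4 * Real.sin (LL 0)) / (x - 0)
        = x^3 * Real.sin (LL x) := by field_simp; ring
    rw [this, Real.norm_eq_abs, abs_mul, abs_pow]
    calc |x|^3 * |Real.sin (LL x)| ≤ |x|^3 * 1 :=
          mul_le_mul_of_nonneg_left (Real.abs_sin_le_one _) (by positivity)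
      _ = |x|^3 := by ring
  · have : Continuous fun x : ℝ => |x|^3 := by continuity
    simpa using (this.tendsto' 0 0 (by simp)).mono_left nhdsWithin_le_nhds

lemma hdG10 : HasDerivAt GG1 0 0 := by
  rw [hasDerivAt_iff_tendsto_slope]
  apply squeeze_zero_norm' (a := fun x : ℝ => 5 * |x|^2)
  · filter_upwards [ev20] with x ⟨hx2, hx⟩
    obtain ⟨hA0, hA1⟩ := Abound hx hx2
    rw [slope_def_field]
    have : (GG1 x - GG1 0) / (x - 0) = x^2 * (4 * Real.sin (LL x) - AA x * Real.cos (LL x)) := by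
      simp only [GG1]; field_simp; ring
    rw [this, Real.norm_eq_abs, abs_mul, abs_pow]
    have hb : |4 * Real.sin (LL x) - AA x * Real.cos (LL x)| ≤ 5 := by
      calc |4 * Real.sin (LL x) - AA x * Real.cos (LL x)|
          ≤ |4 * Real.sin (LL x)| + |AA x * Real.cos (LL x)| := abs_sub _ _
        _ ≤ 4 * 1 + 1 * 1 := by
            rw [abs_mul, abs_mul]
            gcongr
            · norm_num
            · exact Real.abs_sin_le_one _
            · rw [abs_of_nonneg hA0]; exact hA1
            · exact Real.abs_cos_le_one _
        _ = 5 := by norm_num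
    calc |x|^2 * |4 * Real.sin (LL x) - AA x * Real.cos (LL x)| ≤ |x|^2 * 5 :=
          mul_le_mul_of_nonneg_left hb (by positivity)
      _ = 5 * |x|^2 := by ring
  · have : Continuous fun x : ℝ => 5 * |x|^2 := by continuity
    simpa using (this.tendsto' 0 0 (by simp)).mono_left nhdsWithin_le_nhds

lemma hdG20 : HasDerivAt GG2 0 0 := by
  rw [hasDerivAt_iff_tendsto_slope]
  apply squeeze_zero_norm' (a := fun x : ℝ => 21 * |x|)
  · filter_upwards [ev20] with x ⟨hx2, hx⟩
    obtain ⟨hA0, hA1⟩ := Abound hx hx2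
    have hA : |AA x| ≤ 1 := by rw [abs_of_nonneg hA0]; exact hA1
    set S := Real.sin (LL x); set C := Real.cos (LL x); set A := AA x
    have hS : |S| ≤ 1 := Real.abs_sin_le_one _
    have hC : |C| ≤ 1 := Real.abs_cos_le_one _
    rw [slope_def_field]
    have : (GG2 x - GG2 0) / (x - 0) = x * (12 * S - 7 * A * C - A^2 * C - A^2 * S) := by
      simp only [GG2]; field_simp; ring
    rw [this, Real.norm_eq_abs, abs_mul]
    have hb : |12 * S - 7 * A * C - A^2 * C - A^2 * S| ≤ 21 := by
      have t1 := abs_sub (12 * S - 7 * A * C - A^2 * C) (A^2 * S)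
      have t2 := abs_sub (12 * S - 7 * A * C) (A^2 * C)
      have t3 := abs_sub (12 * S) (7 * A * C)
      have e1 : |12 * S| ≤ 12 := by
        rw [abs_mul, abs_of_nonneg (by norm_num : (0:ℝ) ≤ 12)]; nlinarith [abs_nonneg S]
      have e2 : |7 * A * C| ≤ 7 := by
        rw [abs_mul, abs_mul, abs_of_nonneg (by norm_num : (0:ℝ) ≤ 7)]
        nlinarith [abs_nonneg A, abs_nonneg C]
      have e3 : |A^2 * C| ≤ 1 := by
        rw [abs_mul, abs_pow]; nlinarith [abs_nonneg A, abs_nonneg C]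
      have e4 : |A^2 * S| ≤ 1 := by
        rw [abs_mul, abs_pow]; nlinarith [abs_nonneg A, abs_nonneg S]
      linarith
    calc |x| * |12 * S - 7 * A * C - A^2 * C - A^2 * S| ≤ |x| * 21 :=
          mul_le_mul_of_nonneg_left hb (abs_nonneg _)
      _ = 21 * |x| := by ring
  · have : Continuous fun x : ℝ => 21 * |x| := by continuity
    simpa using (this.tendsto' 0 0 (by simp)).mono_left nhdsWithin_le_nhds

lemma hcontG3 : ContinuousOn GG3 (Metric.ball (0:ℝ) (1/20)) := by
  intro x hx
  rw [Metric.mem_ball, Real.dist_eq, sub_zero] at hx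
  rcases eq_or_ne x 0 with rfl | hx0
  · have h0 : GG3 0 = 0 := by simp [GG3]
    rw [ContinuousWithinAt, h0]
    apply squeeze_zero_norm' (a := fun y : ℝ => 72 * |y|)
    · filter_upwards [self_mem_nhdsWithin] with y hy
      rw [Metric.mem_ball, Real.dist_eq, sub_zero] at hy
      rcases eq_or_ne y 0 with rfl | hy0
      · simp [GG3]
      · obtain ⟨hA0, hA1⟩ := Abound hy0 hy
        have hA : |AA y| ≤ 1 := by rw [abs_of_nonneg hA0]; exact hA1
        set S := Real.sin (LL y); set C := Real.cos (LL y); set A := AA y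
        have hS : |S| ≤ 1 := Real.abs_sin_le_one _
        have hC : |C| ≤ 1 := Real.abs_cos_le_one _
        rw [Real.norm_eq_abs, GG3, abs_mul]
        have hb : |24 * S - 26 * A * C - 9 * A^2 * C - 9 * A^2 * S - A^3 * C - 3 * A^3 * S|
            ≤ 72 := by
          have t1 := abs_sub (24 * S - 26 * A * C - 9 * A^2 * C - 9 * A^2 * S - A^3 * C)
            (3 * A^3 * S)
          have t2 := abs_sub (24 * S - 26 * A * C - 9 * A^2 * C - 9 * A^2 * S) (A^3 * C)
          have t3 := abs_sub (24 * S - 26 * A * C - 9 * A^2 * C) (9 * A^2 * S)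
          have t4 := abs_sub (24 * S - 26 * A * C) (9 * A^2 * C)
          have t5 := abs_sub (24 * S) (26 * A * C)
          have e1 : |24 * S| ≤ 24 := by
            rw [abs_mul, abs_of_nonneg (by norm_num : (0:ℝ) ≤ 24)]; nlinarith [abs_nonneg S]
          have e2 : |26 * A * C| ≤ 26 := by
            rw [abs_mul, abs_mul, abs_of_nonneg (by norm_num : (0:ℝ) ≤ 26)]
            nlinarith [abs_nonneg A, abs_nonneg C]
          have e3 : |9 * A^2 * C| ≤ 9 := by
            rw [abs_mul, abs_mul, abs_pow, abs_of_nonneg (by norm_num : (0:ℝ) ≤ 9)]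
            nlinarith [abs_nonneg A, abs_nonneg C]
          have e4 : |9 * A^2 * S| ≤ 9 := by
            rw [abs_mul, abs_mul, abs_pow, abs_of_nonneg (by norm_num : (0:ℝ) ≤ 9)]
            nlinarith [abs_nonneg A, abs_nonneg S]
          have hA3 : |A|^3 ≤ 1 := pow_le_one₀ (abs_nonneg _) hA
          have e5 : |A^3 * C| ≤ 1 := by
            rw [abs_mul, abs_pow]; nlinarith [abs_nonneg C, pow_nonneg (abs_nonneg A) 3]
          have e6 : |3 * A^3 * S| ≤ 3 := by
            rw [abs_mul, abs_mul, abs_pow, abs_of_nonneg (by norm_num : (0:ℝ) ≤ 3)]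
            nlinarith [abs_nonneg S, pow_nonneg (abs_nonneg A) 3]
          linarith
        calc |y| * _ ≤ |y| * 72 := mul_le_mul_of_nonneg_left hb (abs_nonneg _)
          _ = 72 * |y| := by ring
    · have hcont : Continuous fun y : ℝ => 72 * |y| := by continuity
      simpa using (hcont.tendsto' 0 0 (by simp)).mono_left nhdsWithin_le_nhds
  · have hl := key hx0 hx
    have hl0 : -Real.log x ≠ 0 := by linarith
    have hlog : ContinuousAt (fun y : ℝ => -Real.log y) x := (Real.continuousAt_log hx0).neg
    have hLL : ContinuousAt LL x :=
      ContinuousAt.comp (f := fun y : ℝ => -Real.log y) (Real.continuousAt_log hl0) hlog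
    have hAA : ContinuousAt AA x := hlog.inv₀ hl0
    have hS : ContinuousAt (fun y => Real.sin (LL y)) x :=
      ContinuousAt.comp (f := LL) Real.continuous_sin.continuousAt hLL
    have hC : ContinuousAt (fun y => Real.cos (LL y)) x :=
      ContinuousAt.comp (f := LL) Real.continuous_cos.continuousAt hLL
    exact (continuousAt_id.mul ((((((hS.const_mul 24).sub
      (((hAA.const_mul 26)).mul hC)).sub (((hAA.pow 2).const_mul 9).mul hC)).sub
      (((hAA.pow 2).const_mul 9).mul hS)).sub ((hAA.pow 3).mul hC)).sub
      (((hAA.pow 3).const_mul 3).mul hS))).continuousWithinAt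

lemma fun_eq : (fun x : ℝ => if x = 0 then 0 else x ^ 4 * Real.sin (Real.log (Real.log (1 / |x|))))
    = fun x : ℝ => x ^ 4 * Real.sin (LL x) := by
  funext x
  rcases eq_or_ne x 0 with rfl | hx
  · simp
  · rw [if_neg hx, LL, one_div, Real.log_inv, Real.log_abs]

lemma memball {x : ℝ} (hx : x ∈ Metric.ball (0:ℝ) (1/20)) : |x| < 1/20 := by
  rwa [Metric.mem_ball, Real.dist_eq, sub_zero] at hx

lemma hd1 : ∀ x ∈ Metric.ball (0:ℝ) (1/20),
    HasDerivAt (fun y : ℝ => y ^ 4 * Real.sin (LL y)) (GG1 x) x := by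
  intro x hx
  rcases eq_or_ne x 0 with rfl | hx0
  · simpa [GG1] using hdF0
  · exact hdF hx0 (key hx0 (memball hx))

lemma hd2 : ∀ x ∈ Metric.ball (0:ℝ) (1/20), HasDerivAt GG1 (GG2 x) x := by
  intro x hx
  rcases eq_or_ne x 0 with rfl | hx0
  · simpa [GG2] using hdG10
  · exact hdG1 hx0 (key hx0 (memball hx))

lemma hd3 : ∀ x ∈ Metric.ball (0:ℝ) (1/20), HasDerivAt GG2 (GG3 x) x := by
  intro x hx
  rcases eq_or_ne x 0 with rfl | hx0
  · simpa [GG3] using hdG20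
  · exact hdG2 hx0 (key hx0 (memball hx))

theorem stmt0 :
    ∃ s ∈ 𝓝 (0 : ℝ),
      ContDiffOn ℝ 3
        (fun x : ℝ => if x = 0 then 0 else x ^ 4 * Real.sin (Real.log (Real.log (1 / |x|)))) s ∧
      (fun x : ℝ => if x = 0 then 0 else x ^ 4 * Real.sin (Real.log (Real.log (1 / |x|)))) 0 = 0 ∧
      deriv (fun x : ℝ => if x = 0 then 0 else x ^ 4 * Real.sin (Real.log (Real.log (1 / |x|)))) 0 = 0 ∧
      deriv (deriv (fun x : ℝ => if x = 0 then 0 else x ^ 4 * Real.sin (Real.log (Real.log (1 / |x|))))) 0 = 0 ∧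
      deriv (deriv (deriv (fun x : ℝ => if x = 0 then 0 else x ^ 4 * Real.sin (Real.log (Real.log (1 / |x|)))))) 0 = 0 := by
  rw [fun_eq]
  set s := Metric.ball (0:ℝ) (1/20) with hs
  have hs0 : (0:ℝ) ∈ s := by simp [hs]
  have hopen : IsOpen s := Metric.isOpen_ball
  have hmem : s ∈ 𝓝 (0:ℝ) := hopen.mem_nhds hs0
  set F := fun y : ℝ => y ^ 4 * Real.sin (LL y) with hF
  refine ⟨s, hmem, ?_, ?_, ?_, ?_, ?_⟩
  · -- ContDiffOn
    have e1 : ∀ x ∈ s, deriv F x = GG1 x := fun x hx => (hd1 x hx).deriv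
    have e2 : ∀ x ∈ s, deriv GG1 x = GG2 x := fun x hx => (hd2 x hx).deriv
    have e3 : ∀ x ∈ s, deriv GG2 x = GG3 x := fun x hx => (hd3 x hx).deriv
    rw [show (3 : WithTop ℕ∞) = 2 + 1 by norm_num, contDiffOn_succ_iff_deriv_of_isOpen hopen]
    refine ⟨fun x hx => (hd1 x hx).differentiableAt.differentiableWithinAt, by simp, ?_⟩
    refine ContDiffOn.congr ?_ e1
    rw [show (2 : WithTop ℕ∞) = 1 + 1 by norm_num, contDiffOn_succ_iff_deriv_of_isOpen hopen]
    refine ⟨fun x hx => (hd2 x hx).differentiableAt.differentiableWithinAt, by simp, ?_⟩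
    refine ContDiffOn.congr ?_ e2
    rw [show (1 : WithTop ℕ∞) = 0 + 1 by norm_num, contDiffOn_succ_iff_deriv_of_isOpen hopen]
    refine ⟨fun x hx => (hd3 x hx).differentiableAt.differentiableWithinAt, by simp, ?_⟩
    refine ContDiffOn.congr ?_ e3
    rw [contDiffOn_zero]
    exact hcontG3
  · simp [hF]
  · have := (hd1 0 hs0).deriv
    rw [this]; simp [GG1]
  · have heq : deriv F =ᶠ[𝓝 0] GG1 := by
      filter_upwards [hmem] with x hx using (hd1 x hx).deriv
    rw [heq.deriv_eq, (hd2 0 hs0).deriv]; simp [GG2]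
  · have heq2 : deriv (deriv F) =ᶠ[𝓝 0] GG2 := by
      filter_upwards [hopen.eventually_mem hs0] with x hx
      have hx' : deriv F =ᶠ[𝓝 x] GG1 := by
        filter_upwards [hopen.mem_nhds hx] with y hy using (hd1 y hy).deriv
      rw [hx'.deriv_eq, (hd2 x hx).deriv]
    rw [heq2.deriv_eq, (hd3 0 hs0).deriv]; simp [GG3]
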